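/- Along the landing flow Ẋ = −Λ(X), one has d/dt f(X(t)) = −‖ψ(X(t))‖² − λ⟨X X^T − I_p, Sym(∇f(X) X^T)⟩, where Sym(M) = (M + M^T)/2 and ψ(X) = Skew(∇f(X)X^T). -/
import Mathlib


open Matrix

/-- Frobenius norm of a square real matrix. -/
noncomputable def frob {p : ℕ} (M : Matrix (Fin p) (Fin p) ℝ) : ℝ :=
  Real.sqrt (Matrix.trace (Mᵀ * M))

lemma trace_tmul_self_nonneg {p : ℕ} (M : Matrix (Fin p) (Fin p) ℝ) :
    0 ≤ Matrix.trace (Mᵀ * M) := by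
  simp only [Matrix.trace, Matrix.diag, Matrix.mul_apply, Matrix.transpose_apply]
  exact Finset.sum_nonneg fun i _ => Finset.sum_nonneg fun j _ => mul_self_nonneg _

lemma frob_sq {p : ℕ} (M : Matrix (Fin p) (Fin p) ℝ) :
    frob M ^ 2 = Matrix.trace (Mᵀ * M) :=
  Real.sq_sqrt (trace_tmul_self_nonneg M)

lemma frob_le' {p : ℕ} (E : Matrix (Fin p) (Fin p) ℝ) (b : ℝ) (hb : 0 ≤ b)
    (h : ∀ i j, |E i j| ≤ b) : frob E ≤ p * b := by
  have h1 : Matrix.trace (Eᵀ * E) ≤ ((p:ℝ) * b) ^ 2 := by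
    simp only [Matrix.trace, Matrix.diag, Matrix.mul_apply, Matrix.transpose_apply]
    have hbd : ∀ i j : Fin p, E j i * E j i ≤ b ^ 2 := by
      intro i j
      calc E j i * E j i = |E j i| ^ 2 := by rw [sq_abs]; ring
        _ ≤ b ^ 2 := pow_le_pow_left₀ (abs_nonneg _) (h j i) 2
    calc (∑ i, ∑ j, E j i * E j i) ≤ ∑ _i : Fin p, ∑ _j : Fin p, b ^ 2 := by
          apply Finset.sum_le_sum; intro i _; apply Finset.sum_le_sum
          intro j _; exact hbd i j
      _ = (p:ℝ)^2 * b^2 := by simp [Finset.sum_const]; ring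
      _ = ((p:ℝ) * b)^2 := by ring
  calc frob E ≤ Real.sqrt (((p:ℝ) * b)^2) := Real.sqrt_le_sqrt h1
    _ = (p:ℝ) * b := Real.sqrt_sq (by positivity)

lemma trace_skew_symm {p : ℕ} (P Q : Matrix (Fin p) (Fin p) ℝ)
    (hP : Pᵀ = -P) (hQ : Qᵀ = Q) : Matrix.trace (Pᵀ * Q) = 0 := by
  have h1 : Matrix.trace (Pᵀ * Q) = - Matrix.trace (P * Q) := by
    rw [hP, Matrix.neg_mul, Matrix.trace_neg]
  have h2 : Matrix.trace (Pᵀ * Q) = Matrix.trace (P * Q) := by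
    rw [← Matrix.trace_transpose (Pᵀ * Q), Matrix.transpose_mul,
      Matrix.transpose_transpose, hQ, Matrix.trace_mul_comm]
  linarith

lemma trace_symm_skew {p : ℕ} (P Q : Matrix (Fin p) (Fin p) ℝ)
    (hP : Pᵀ = -P) (hQ : Qᵀ = Q) : Matrix.trace (Qᵀ * P) = 0 := by
  have h0 := trace_skew_symm P Q hP hQ
  have h1 : Matrix.trace (Pᵀ * Q) = - Matrix.trace (P * Q) := by
    rw [hP, Matrix.neg_mul, Matrix.trace_neg]
  have h2 : Matrix.trace (P * Q) = 0 := by linarith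
  rw [hQ, Matrix.trace_mul_comm]
  exact h2

lemma key_algebra {p : ℕ} (G X : Matrix (Fin p) (Fin p) ℝ) (lam : ℝ) :
    Matrix.trace (Gᵀ *
      ((-(((1/2 : ℝ) • (G * Xᵀ - (G * Xᵀ)ᵀ)) + lam • (X * Xᵀ - 1))) * X))
    = -(frob ((1/2 : ℝ) • (G * Xᵀ - (G * Xᵀ)ᵀ))) ^ 2 -
      lam * Matrix.trace ((X * Xᵀ - 1)ᵀ * ((1/2 : ℝ) • (G * Xᵀ + (G * Xᵀ)ᵀ))) := by
  set A := G * Xᵀ with hA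
  set P := (1/2 : ℝ) • (A - Aᵀ) with hPdef
  set Q := (1/2 : ℝ) • (A + Aᵀ) with hQdef
  set S := X * Xᵀ - 1 with hSdef
  have hP : Pᵀ = -P := by
    rw [hPdef, Matrix.transpose_smul, Matrix.transpose_sub, Matrix.transpose_transpose,
      ← smul_neg]
    congr 1; abel
  have hQ : Qᵀ = Q := by
    rw [hQdef, Matrix.transpose_smul, Matrix.transpose_add, Matrix.transpose_transpose]
    congr 1; abel
  have hS : Sᵀ = S := by
    rw [hSdef, Matrix.transpose_sub, Matrix.transpose_mul, Matrix.transpose_transpose,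
      Matrix.transpose_one]
  have hAPQ : A = Q + P := by
    rw [hPdef, hQdef, ← smul_add]
    have h2 : A + Aᵀ + (A - Aᵀ) = (2:ℝ) • A := by rw [two_smul]; abel
    rw [h2, smul_smul]; norm_num
  have hred : ∀ M : Matrix (Fin p) (Fin p) ℝ,
      Matrix.trace (Gᵀ * (M * X)) = Matrix.trace (Aᵀ * M) := by
    intro M
    rw [← Matrix.mul_assoc, Matrix.trace_mul_comm, ← Matrix.mul_assoc]
    congr 1
    rw [hA, Matrix.transpose_mul, Matrix.transpose_transpose]
  have e1 : Matrix.trace (Aᵀ * P) = Matrix.trace (Pᵀ * P) := by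
    rw [hAPQ, Matrix.transpose_add, Matrix.add_mul, Matrix.trace_add,
      trace_symm_skew P Q hP hQ, zero_add]
  have e2 : Matrix.trace (Aᵀ * S) = Matrix.trace (Sᵀ * Q) := by
    rw [hAPQ, Matrix.transpose_add, Matrix.add_mul, Matrix.trace_add,
      trace_skew_symm P S hP hS, add_zero, hQ, hS]
    exact Matrix.trace_mul_comm Q S
  have hfrob : (frob P) ^ 2 = Matrix.trace (Pᵀ * P) := frob_sq P
  clear_value A P Q S
  calc Matrix.trace (Gᵀ * ((-(P + lam • S)) * X))
      = Matrix.trace (Aᵀ * (-(P + lam • S))) := hred _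
    _ = -(Matrix.trace (Aᵀ * P) + lam * Matrix.trace (Aᵀ * S)) := by
        rw [Matrix.mul_neg, Matrix.trace_neg, Matrix.mul_add, Matrix.trace_add,
          Matrix.mul_smul, Matrix.trace_smul, smul_eq_mul]
    _ = -(frob P) ^ 2 - lam * Matrix.trace (Sᵀ * Q) := by
        rw [e1, e2, ← hfrob]; ring

/-- Along the landing flow `Ẋ = −Λ(X)`,
`d/dt f(X(t)) = −‖ψ(X(t))‖² − λ ⟨X Xᵀ − I, Sym(∇f(X) Xᵀ)⟩`,
where `ψ(X) = Skew(∇f(X) Xᵀ)`. -/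
theorem stmt_16 (p : ℕ) (f : Matrix (Fin p) (Fin p) ℝ → ℝ)
    (g : Matrix (Fin p) (Fin p) ℝ → Matrix (Fin p) (Fin p) ℝ)
    (hgrad : ∀ X : Matrix (Fin p) (Fin p) ℝ, ∀ ε > (0:ℝ), ∃ δ > (0:ℝ),
      ∀ E : Matrix (Fin p) (Fin p) ℝ, frob E ≤ δ →
        |f (X + E) - f X - Matrix.trace ((g X)ᵀ * E)| ≤ ε * frob E)
    (lam : ℝ) (hlam : 0 < lam)
    (ψ : Matrix (Fin p) (Fin p) ℝ → Matrix (Fin p) (Fin p) ℝ)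
    (hψdef : ∀ Y, ψ Y = (1/2 : ℝ) • (g Y * Yᵀ - (g Y * Yᵀ)ᵀ))
    (X : ℝ → Matrix (Fin p) (Fin p) ℝ)
    (hflow : ∀ t i j, HasDerivAt (fun s => X s i j)
      ((-((ψ (X t) + lam • (X t * (X t)ᵀ - 1)) * X t)) i j) t) :
    ∀ t, HasDerivAt (fun s => f (X s))
      (-(frob (ψ (X t))) ^ 2 - lam * Matrix.trace ((X t * (X t)ᵀ - 1)ᵀ *
        ((1/2 : ℝ) • (g (X t) * (X t)ᵀ + (g (X t) * (X t)ᵀ)ᵀ)))) t := by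
  intro t
  -- work in the pi type, which is definitionally equal to Matrix
  set V : Matrix (Fin p) (Fin p) ℝ :=
    -((ψ (X t) + lam • (X t * (X t)ᵀ - 1)) * X t) with hV
  let X' : ℝ → (Fin p → Fin p → ℝ) := fun s i j => X s i j
  let V' : Fin p → Fin p → ℝ := fun i j => V i j
  have hXderiv : HasDerivAt X' V' t := by
    rw [hasDerivAt_pi]
    intro i
    rw [hasDerivAt_pi]
    intro j
    exact hflow t i j
  set Y := X t with hY
  let F : (Fin p → Fin p → ℝ) → ℝ := fun M => f (Matrix.of M)
  let Llin : (Fin p → Fin p → ℝ) →ₗ[ℝ] ℝ :=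
    { toFun := fun E => Matrix.trace ((g Y)ᵀ * Matrix.of E)
      map_add' := by
        intro a b
        show Matrix.trace ((g Y)ᵀ * (Matrix.of a + Matrix.of b)) = _
        rw [Matrix.mul_add, Matrix.trace_add]
      map_smul' := by
        intro c a
        show Matrix.trace ((g Y)ᵀ * (c • Matrix.of a)) = c * Matrix.trace ((g Y)ᵀ * Matrix.of a)
        rw [Matrix.mul_smul, Matrix.trace_smul, smul_eq_mul] }
  let L : (Fin p → Fin p → ℝ) →L[ℝ] ℝ := LinearMap.toContinuousLinearMap Llin
  have hfd : HasFDerivAt F L (X' t) := by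
    rw [hasFDerivAt_iff_isLittleO_nhds_zero, Asymptotics.isLittleO_iff]
    intro c hc
    obtain ⟨δ, hδ, hbd⟩ := hgrad Y (c / (p + 1)) (by positivity)
    have hball : ∀ᶠ E : Fin p → Fin p → ℝ in nhds 0, ‖E‖ < δ / (p + 1) := by
      have hmem : Metric.ball (0 : Fin p → Fin p → ℝ) (δ / (p+1)) ∈
          nhds (0 : Fin p → Fin p → ℝ) :=
        Metric.ball_mem_nhds _ (by positivity)
      filter_upwards [hmem] with E hE
      simpa [dist_eq_norm] using hE
    filter_upwards [hball] with E hE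
    have hent : ∀ i j, |Matrix.of E i j| ≤ ‖E‖ := by
      intro i j
      have h1 : ‖E i j‖ ≤ ‖E i‖ := norm_le_pi_norm (E i) j
      have h2 : ‖E i‖ ≤ ‖E‖ := norm_le_pi_norm E i
      calc |Matrix.of E i j| = ‖E i j‖ := (Real.norm_eq_abs _).symm
        _ ≤ ‖E‖ := le_trans h1 h2
    have hfrobE : frob (Matrix.of E) ≤ (p:ℝ) * ‖E‖ :=
      frob_le' (Matrix.of E) ‖E‖ (norm_nonneg _) hent
    have hfrobδ : frob (Matrix.of E) ≤ δ := by
      have h1 : (p:ℝ) * ‖E‖ ≤ (p:ℝ) * (δ / (p+1)) :=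
        mul_le_mul_of_nonneg_left (le_of_lt hE) (Nat.cast_nonneg p)
      have h2 : (p:ℝ) * (δ / (p+1)) ≤ δ := by
        rw [mul_div_assoc', div_le_iff₀ (by positivity)]
        nlinarith [Nat.cast_nonneg (α := ℝ) p]
      linarith
    have hb := hbd (Matrix.of E) hfrobδ
    have hLE : L E = Matrix.trace ((g Y)ᵀ * Matrix.of E) := rfl
    have hgoal : F (X' t + E) - F (X' t) - L E
        = f (Y + Matrix.of E) - f Y - Matrix.trace ((g Y)ᵀ * Matrix.of E) := rfl
    rw [Real.norm_eq_abs, hgoal]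
    calc |f (Y + Matrix.of E) - f Y - Matrix.trace ((g Y)ᵀ * Matrix.of E)|
        ≤ (c / (p+1)) * frob (Matrix.of E) := hb
      _ ≤ (c / (p+1)) * ((p:ℝ) * ‖E‖) :=
          mul_le_mul_of_nonneg_left hfrobE (by positivity)
      _ ≤ c * ‖E‖ := by
          rw [div_mul_eq_mul_div, div_le_iff₀ (by positivity)]
          nlinarith [norm_nonneg E, Nat.cast_nonneg (α := ℝ) p, hc.le]
  have hcomp := hfd.comp_hasDerivAt t hXderiv
  have hLV : L V' = -(frob (ψ Y)) ^ 2 - lam * Matrix.trace ((Y * Yᵀ - 1)ᵀ *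
      ((1/2 : ℝ) • (g Y * Yᵀ + (g Y * Yᵀ)ᵀ))) := by
    have hLE : L V' = Matrix.trace ((g Y)ᵀ * V) := rfl
    rw [hLE, hV, hψdef Y, ← Matrix.neg_mul]
    exact key_algebra (g Y) Y lam
  rw [hLV] at hcomp
  exact hcomp
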